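/- The map irc exchanges the statistics A_EN and A_NE: for any permutation π of [n], A_EN(irc(π)) = A_NE(π) and A_NE(irc(π)) = A_EN(π). Consequently A_EN and A_NE are equidistributed on S_n. -/
import Mathlib


/-- The inverse-reverse-complement map: `irc π i = j ↔ π (rev j) = rev i`. -/
def irc {n : ℕ} (π : Equiv.Perm (Fin n)) : Equiv.Perm (Fin n) :=
  Fin.revPerm * π⁻¹ * Fin.revPerm

def AEE {n : ℕ} (π : Equiv.Perm (Fin n)) : ℕ :=
  (Finset.univ.filter fun p : Fin n × Fin n =>
    p.2 < p.1 ∧ p.1 ≤ π p.1 ∧ π p.1 < π p.2).card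

def ANN {n : ℕ} (π : Equiv.Perm (Fin n)) : ℕ :=
  (Finset.univ.filter fun p : Fin n × Fin n =>
    π p.2 < π p.1 ∧ π p.1 < p.1 ∧ p.1 < p.2).card

def AEN {n : ℕ} (π : Equiv.Perm (Fin n)) : ℕ :=
  (Finset.univ.filter fun p : Fin n × Fin n =>
    p.2 ≤ π p.2 ∧ π p.2 < π p.1 ∧ π p.1 < p.1).card

def ANE {n : ℕ} (π : Equiv.Perm (Fin n)) : ℕ :=
  (Finset.univ.filter fun p : Fin n × Fin n =>
    π p.1 < p.1 ∧ p.1 < p.2 ∧ p.2 ≤ π p.2).card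

def CEE {n : ℕ} (π : Equiv.Perm (Fin n)) : ℕ :=
  (Finset.univ.filter fun p : Fin n × Fin n =>
    p.2 < p.1 ∧ p.1 ≤ π p.2 ∧ π p.2 < π p.1).card

def CNN {n : ℕ} (π : Equiv.Perm (Fin n)) : ℕ :=
  (Finset.univ.filter fun p : Fin n × Fin n =>
    π p.1 < π p.2 ∧ π p.2 < p.1 ∧ p.1 < p.2).card


lemma AEN_irc {n : ℕ} (π : Equiv.Perm (Fin n)) : AEN (irc π) = ANE π := by
  unfold AEN ANE irc
  apply Finset.card_equiv (Equiv.prodCongr (Fin.revPerm.trans π⁻¹) (Fin.revPerm.trans π⁻¹))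
  intro p
  simp only [Finset.mem_filter, Finset.mem_univ, true_and, Equiv.prodCongr_apply,
    Prod.map_fst, Prod.map_snd, Equiv.trans_apply, Fin.revPerm_apply,
    Equiv.Perm.mul_apply]
  constructor
  · rintro ⟨h1, h2, h3⟩
    refine ⟨?_, ?_, ?_⟩
    · simpa using Fin.rev_lt_rev.mpr h3
    · simpa using Fin.rev_lt_rev.mpr h2
    · simpa using Fin.rev_le_rev.mpr h1
  · rintro ⟨h1, h2, h3⟩
    refine ⟨?_, ?_, ?_⟩
    · simpa using Fin.rev_le_rev.mpr h3
    · simpa using Fin.rev_lt_rev.mpr h2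
    · simpa using Fin.rev_lt_rev.mpr h1

lemma irc_irc {n : ℕ} (π : Equiv.Perm (Fin n)) : irc (irc π) = π := by
  ext i
  simp [irc, Equiv.Perm.mul_apply, mul_inv_rev]

theorem irc_exchanges_AEN_ANE (n : ℕ) (π : Equiv.Perm (Fin n)) :
    AEN (irc π) = ANE π ∧ ANE (irc π) = AEN π := by
  refine ⟨AEN_irc π, ?_⟩
  have := AEN_irc (irc π)
  rwa [irc_irc, eq_comm] at this
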